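/- Let $\mathcal{D}: \mathbb{R}^n \rightrightarrows \mathbb{R}^n$ be locally bounded, graph-closed, and convex-valued with nonempty closed values. Let $\{\delta_k\}$ be a nonnegative sequence with $\delta_k \to 0$, $\{x_k\}$ a bounded sequence in $\mathbb{R}^n$, and $\{d_k\}$ a sequence with $d_k \in \mathrm{conv}(\mathcal{D}^{\delta_k}(x_k))$ for all $k$. Then for every $T > 0$ there exists $K_T$ such that $d_k \in \mathcal{D}^{T}(x_k)$ for all $k \geq K_T$. -/
import Mathlib

/-- The `δ`-expansion of a set-valued map `D`. -/
def deltaExpansion {n : ℕ} (D : EuclideanSpace ℝ (Fin n) → Set (EuclideanSpace ℝ (Fin n)))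
    (δ : ℝ) (x : EuclideanSpace ℝ (Fin n)) : Set (EuclideanSpace ℝ (Fin n)) :=
  {w | ∃ z, ‖z - x‖ ≤ δ ∧ Metric.infDist w (D z) ≤ δ}

open Filter Metric Topology

/-- Sublevel sets of the distance to a nonempty closed convex set are convex. -/
lemma convex_infDist_sublevel {E : Type*} [NormedAddCommGroup E] [NormedSpace ℝ E]
    [ProperSpace E] {s : Set E} (hs : Convex ℝ s) (hcl : IsClosed s) (hne : s.Nonempty)
    (T : ℝ) : Convex ℝ {w : E | Metric.infDist w s ≤ T} := by
  intro w1 h1 w2 h2 a b ha hb hab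
  obtain ⟨y1, hy1, hd1⟩ := hcl.exists_infDist_eq_dist hne w1
  obtain ⟨y2, hy2, hd2⟩ := hcl.exists_infDist_eq_dist hne w2
  have hy : a • y1 + b • y2 ∈ s := hs hy1 hy2 ha hb hab
  have h3 : Metric.infDist (a • w1 + b • w2) s ≤ dist (a • w1 + b • w2) (a • y1 + b • y2) :=
    Metric.infDist_le_dist_of_mem hy
  have h4 : dist (a • w1 + b • w2) (a • y1 + b • y2) ≤ a * dist w1 y1 + b * dist w2 y2 := by
    calc dist (a • w1 + b • w2) (a • y1 + b • y2)
        ≤ dist (a • w1) (a • y1) + dist (b • w2) (b • y2) := dist_add_add_le _ _ _ _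
      _ = |a| * dist w1 y1 + |b| * dist w2 y2 := by rw [dist_smul₀, dist_smul₀, Real.norm_eq_abs, Real.norm_eq_abs]
      _ = a * dist w1 y1 + b * dist w2 y2 := by rw [abs_of_nonneg ha, abs_of_nonneg hb]
  have hl1 : Metric.infDist w1 s ≤ T := h1
  have hl2 : Metric.infDist w2 s ≤ T := h2
  rw [hd1] at hl1; rw [hd2] at hl2
  have := mul_le_mul_of_nonneg_left hl1 ha
  have := mul_le_mul_of_nonneg_left hl2 hb
  have hTeq : a * T + b * T = T := by rw [← add_mul, hab, one_mul]
  simp only [Set.mem_setOf_eq]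
  linarith

/-- Local upper semicontinuity from closed graph + local boundedness. -/
lemma usc_of_closedGraph {n : ℕ} (D : EuclideanSpace ℝ (Fin n) → Set (EuclideanSpace ℝ (Fin n)))
    (hgraph : IsClosed {p : EuclideanSpace ℝ (Fin n) × EuclideanSpace ℝ (Fin n) | p.2 ∈ D p.1})
    (hlocbdd : ∀ K : Set (EuclideanSpace ℝ (Fin n)), IsCompact K →
      ∃ C : ℝ, ∀ x ∈ K, ∀ d ∈ D x, ‖d‖ ≤ C)
    (x₀ : EuclideanSpace ℝ (Fin n)) :
    ∀ ε > (0 : ℝ), ∃ r > (0 : ℝ), ∀ z, dist z x₀ ≤ r → ∀ w ∈ D z,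
      Metric.infDist w (D x₀) ≤ ε := by
  by_contra hcon
  push_neg at hcon
  obtain ⟨ε, hε, h⟩ := hcon
  have hpos : ∀ m : ℕ, (0:ℝ) < 1 / (m + 1) := by
    intro m; positivity
  choose z hz w hw hfar using fun m : ℕ => h (1 / (m + 1)) (hpos m)
  have hzlim : Tendsto z atTop (𝓝 x₀) := by
    rw [tendsto_iff_dist_tendsto_zero]
    refine squeeze_zero (fun m => dist_nonneg) (fun m => hz m) ?_
    exact tendsto_one_div_add_atTop_nhds_zero_nat
  obtain ⟨C, hC⟩ := hlocbdd (closedBall x₀ 1) (isCompact_closedBall _ _)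
  have hzball : ∀ m, z m ∈ closedBall x₀ 1 := by
    intro m
    rw [mem_closedBall]
    refine (hz m).trans ?_
    rw [div_le_one (by positivity)]
    have := Nat.cast_nonneg (α := ℝ) m; linarith
  have hwball : ∀ m, w m ∈ closedBall (0 : EuclideanSpace ℝ (Fin n)) C := by
    intro m
    rw [mem_closedBall, dist_zero_right]
    exact hC (z m) (hzball m) (w m) (hw m)
  obtain ⟨w₀, -, φ, hφ, hwlim⟩ := tendsto_subseq_of_bounded isBounded_closedBall hwball
  have hzφ : Tendsto (z ∘ φ) atTop (𝓝 x₀) := hzlim.comp hφ.tendsto_atTop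
  have hw₀ : w₀ ∈ D x₀ := by
    have hpair : Tendsto (fun m => (z (φ m), w (φ m))) atTop (𝓝 (x₀, w₀)) :=
      hzφ.prodMk_nhds hwlim
    exact hgraph.mem_of_tendsto hpair (Eventually.of_forall fun m => hw (φ m))
  have hdlim : Tendsto (fun m => dist (w (φ m)) w₀) atTop (𝓝 0) :=
    tendsto_iff_dist_tendsto_zero.mp hwlim
  have := (hdlim.eventually (eventually_lt_nhds hε)).exists
  obtain ⟨m, hm⟩ := this
  have h1 : Metric.infDist (w (φ m)) (D x₀) ≤ dist (w (φ m)) w₀ :=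
    Metric.infDist_le_dist_of_mem hw₀
  have h2 := hfar (φ m)
  linarith

theorem stmt10 (n : ℕ) (D : EuclideanSpace ℝ (Fin n) → Set (EuclideanSpace ℝ (Fin n)))
    (hgraph : IsClosed {p : EuclideanSpace ℝ (Fin n) × EuclideanSpace ℝ (Fin n) | p.2 ∈ D p.1})
    (hne : ∀ x, (D x).Nonempty) (hclosed : ∀ x, IsClosed (D x)) (hconv : ∀ x, Convex ℝ (D x))
    (hlocbdd : ∀ K : Set (EuclideanSpace ℝ (Fin n)), IsCompact K →
      ∃ C : ℝ, ∀ x ∈ K, ∀ d ∈ D x, ‖d‖ ≤ C)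
    (δ : ℕ → ℝ) (hδnonneg : ∀ k, 0 ≤ δ k) (hδ : Tendsto δ atTop (nhds 0))
    (x d : ℕ → EuclideanSpace ℝ (Fin n))
    (hxbdd : ∃ M : ℝ, ∀ k, ‖x k‖ ≤ M)
    (hd : ∀ k, d k ∈ convexHull ℝ (deltaExpansion D (δ k) (x k))) :
    ∀ T > (0 : ℝ), ∃ K : ℕ, ∀ k ≥ K, d k ∈ deltaExpansion D T (x k) := by
  intro T hT
  by_contra hcon
  push_neg at hcon
  obtain ⟨φ, hφ, hbad⟩ := extraction_of_frequently_atTop (frequently_atTop.mpr hcon)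
  obtain ⟨M, hM⟩ := hxbdd
  have hxball : ∀ k, x (φ k) ∈ closedBall (0 : EuclideanSpace ℝ (Fin n)) M := by
    intro k; rw [mem_closedBall, dist_zero_right]; exact hM (φ k)
  obtain ⟨x₀, -, ψ, hψ, hxlim⟩ := tendsto_subseq_of_bounded isBounded_closedBall hxball
  set σ : ℕ → ℕ := φ ∘ ψ with hσ
  have hσmono : StrictMono σ := hφ.comp hψ
  have hδσ : Tendsto (δ ∘ σ) atTop (𝓝 0) := hδ.comp hσmono.tendsto_atTop
  obtain ⟨r, hr, husc⟩ := usc_of_closedGraph D hgraph hlocbdd x₀ (T / 2) (by linarith)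
  -- pick a good index
  have hev1 : ∀ᶠ j in atTop, δ (σ j) < min (T / 2) (r / 2) :=
    hδσ.eventually (eventually_lt_nhds (lt_min (by linarith) (by linarith)))
  have hev2 : ∀ᶠ j in atTop, dist (x (σ j)) x₀ < min T (r / 2) := by
    have : Tendsto (fun j => dist (x (σ j)) x₀) atTop (𝓝 0) :=
      tendsto_iff_dist_tendsto_zero.mp hxlim
    exact this.eventually (eventually_lt_nhds (lt_min hT (by linarith)))
  obtain ⟨j, h1, h2⟩ := (hev1.and hev2).exists
  set k := σ j with hk
  have hδT : δ k < T / 2 := lt_of_lt_of_le h1 (min_le_left _ _)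
  have hδr : δ k < r / 2 := lt_of_lt_of_le h1 (min_le_right _ _)
  have hxT : dist (x k) x₀ < T := lt_of_lt_of_le h2 (min_le_left _ _)
  have hxr : dist (x k) x₀ < r / 2 := lt_of_lt_of_le h2 (min_le_right _ _)
  -- the expansion is contained in the sublevel set
  have hsub : deltaExpansion D (δ k) (x k) ⊆ {w | Metric.infDist w (D x₀) ≤ T} := by
    rintro w ⟨z, hz1, hz2⟩
    have hzx₀ : dist z x₀ ≤ r := by
      calc dist z x₀ ≤ dist z (x k) + dist (x k) x₀ := dist_triangle _ _ _
        _ = ‖z - x k‖ + dist (x k) x₀ := by rw [dist_eq_norm]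
        _ ≤ δ k + dist (x k) x₀ := by linarith
        _ ≤ r := by linarith
    obtain ⟨w', hw', hdw'⟩ := (hclosed z).exists_infDist_eq_dist (hne z) w
    have hww' : dist w w' ≤ δ k := by rw [← hdw']; exact hz2
    have husc' : Metric.infDist w' (D x₀) ≤ T / 2 := husc z hzx₀ w' hw'
    calc Metric.infDist w (D x₀) ≤ Metric.infDist w' (D x₀) + dist w w' :=
          Metric.infDist_le_infDist_add_dist
      _ ≤ T / 2 + δ k := by linarith
      _ ≤ T := by linarith
  have hSconv : Convex ℝ {w : EuclideanSpace ℝ (Fin n) | Metric.infDist w (D x₀) ≤ T} :=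
    convex_infDist_sublevel (hconv x₀) (hclosed x₀) (hne x₀) T
  have hdk : Metric.infDist (d k) (D x₀) ≤ T := convexHull_min hsub hSconv (hd k)
  refine hbad (ψ j) ⟨x₀, ?_, hdk⟩
  rw [← dist_eq_norm]
  calc dist x₀ (x k) = dist (x k) x₀ := dist_comm _ _
    _ ≤ T := hxT.le
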